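/- Let 0 < a < b, c > 1, and 0 < α < α_c := sqrt((c^2-1)/(b c^2 - a)). Define Ŝ(ξ) = sqrt((1 + a ξ^2)/(1 + b ξ^2)) for complex ξ (with the principal branch). Then for all real k ≠ 0, with ξ = k + iα, we have k · Im Ŝ(ξ) < 0. -/

import Mathlib

open Complex

/-- For `0 < a < b`, `c > 1`, `0 < α < α_c = √((c²-1)/(bc²-a))`, and any real `k ≠ 0`,
with `ξ = k + iα` and `Ŝ(ξ) = √((1+aξ²)/(1+bξ²))` (principal branch),
one has `k · Im Ŝ(ξ) < 0`. -/
theorem im_S_sign (a b c α : ℝ) (ha : 0 < a) (hab : a < b) (hc : 1 < c)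
    (hα : 0 < α) (hαc : α < Real.sqrt ((c ^ 2 - 1) / (b * c ^ 2 - a)))
    (k : ℝ) (hk : k ≠ 0) :
    let ξ : ℂ := (k : ℂ) + (α : ℂ) * Complex.I
    let S : ℂ := ((1 + (a : ℂ) * ξ ^ 2) / (1 + (b : ℂ) * ξ ^ 2)) ^ ((1 : ℂ) / 2)
    k * S.im < 0 := by
  intro ξ S
  have hkα : k * α ≠ 0 := mul_ne_zero hk hα.ne'
  have hvim : (1 + (b : ℂ) * ξ ^ 2).im = 2 * b * k * α := by
    simp [ξ, Complex.add_im, Complex.mul_im, sq]; ring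
  have huim : (1 + (a : ℂ) * ξ ^ 2).im = 2 * a * k * α := by
    simp [ξ, Complex.add_im, Complex.mul_im, sq]; ring
  have hv : (1 + (b : ℂ) * ξ ^ 2) ≠ 0 := by
    intro h
    have h2 := congrArg Complex.im h
    rw [hvim] at h2
    simp only [Complex.zero_im] at h2
    have : 2 * b * k * α ≠ 0 :=
      mul_ne_zero (mul_ne_zero (mul_ne_zero two_ne_zero (by linarith)) hk) hα.ne'
    exact this h2
  have hu : (1 + (a : ℂ) * ξ ^ 2) ≠ 0 := by
    intro h
    have h2 := congrArg Complex.im h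
    rw [huim] at h2
    simp only [Complex.zero_im] at h2
    have : 2 * a * k * α ≠ 0 :=
      mul_ne_zero (mul_ne_zero (mul_ne_zero two_ne_zero ha.ne') hk) hα.ne'
    exact this h2
  set w : ℂ := (1 + (a : ℂ) * ξ ^ 2) / (1 + (b : ℂ) * ξ ^ 2) with hwdef
  have hw0 : w ≠ 0 := div_ne_zero hu hv
  have hN : 0 < Complex.normSq (1 + (b : ℂ) * ξ ^ 2) := Complex.normSq_pos.mpr hv
  have him : w.im = 2 * k * α * (a - b) / Complex.normSq (1 + (b : ℂ) * ξ ^ 2) := by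
    rw [hwdef, Complex.div_im, div_sub_div_same]
    congr 1
    simp [ξ, Complex.normSq_apply, sq]
    ring
  have hS : S = Complex.exp (Complex.log w * (1 / 2)) := by
    simp only [S, ← hwdef]
    rw [Complex.cpow_def_of_ne_zero hw0]
  have hSim : S.im = Real.exp ((Complex.log w * (1 / 2)).re) *
      Real.sin (Complex.arg w / 2) := by
    rw [hS, Complex.exp_im]
    congr 2
    simp [Complex.mul_im, Complex.log_im, Complex.log_re]
    ring
  have hexp : 0 < Real.exp ((Complex.log w * (1 / 2)).re) := Real.exp_pos _
  have hpi := Real.pi_pos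
  rcases hk.lt_or_gt with hkneg | hkpos
  · -- k < 0 : im w > 0, arg w > 0, sin(arg/2) > 0, S.im > 0
    have himpos : 0 < w.im := by
      rw [him]
      apply div_pos _ hN
      nlinarith [mul_pos (mul_pos (neg_pos.mpr hkneg) hα) (sub_pos.mpr hab)]
    have hargpos : 0 < Complex.arg w := by
      rcases lt_trichotomy (Complex.arg w) 0 with h | h | h
      · exact absurd (Complex.arg_neg_iff.mp h) (by linarith)
      · exact absurd (Complex.arg_eq_zero_iff.mp h).2 (by linarith)
      · exact h
    have hargle : Complex.arg w ≤ Real.pi := Complex.arg_le_pi w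
    have hsin : 0 < Real.sin (Complex.arg w / 2) :=
      Real.sin_pos_of_pos_of_lt_pi (by linarith) (by linarith)
    have : 0 < S.im := by rw [hSim]; positivity
    exact mul_neg_of_neg_of_pos hkneg this
  · -- k > 0 : im w < 0, arg w < 0, sin(arg/2) < 0, S.im < 0
    have himneg : w.im < 0 := by
      rw [him]
      apply div_neg_of_neg_of_pos _ hN
      nlinarith [mul_pos (mul_pos hkpos hα) (sub_pos.mpr hab)]
    have hargneg : Complex.arg w < 0 := Complex.arg_neg_iff.mpr himneg
    have harggt : -Real.pi < Complex.arg w := Complex.neg_pi_lt_arg w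
    have hsin : Real.sin (Complex.arg w / 2) < 0 :=
      Real.sin_neg_of_neg_of_neg_pi_lt (by linarith) (by linarith)
    have : S.im < 0 := by
      rw [hSim]
      exact mul_neg_of_pos_of_neg hexp hsin
    exact mul_neg_of_pos_of_neg hkpos this
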